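/- For x ∈ ℝ \ {0} and 0 < ε < |x|, the map g_{x,ε}(z) = z + ε²/(z - x) is a conformal (holomorphic injective) map from ℍ \ B̄(x,ε) onto ℍ, where ℍ = {z ∈ ℂ : Im z > 0} and B̄(x,ε) is the closed disc of radius ε centered at x. -/

import Mathlib

open Complex Set

/-- The map `g_{x,ε}(z) = z + ε²/(z - x)`. -/
noncomputable def gMap (x ε : ℝ) (z : ℂ) : ℂ := z + (ε : ℂ)^2 / (z - x)

/-- For `x ∈ ℝ \ {0}` and `0 < ε < |x|`, `g_{x,ε}` is a holomorphic bijection from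
`ℍ \ B̄(x,ε)` onto the upper half-plane `ℍ`. -/
theorem gMap_conformal_upperHalfPlane (x ε : ℝ) (hx : x ≠ 0) (hε : 0 < ε) (hεx : ε < |x|) :
    (∀ z ∈ {z : ℂ | 0 < z.im} \ Metric.closedBall (x : ℂ) ε,
        DifferentiableAt ℂ (gMap x ε) z) ∧
    Set.InjOn (gMap x ε) ({z : ℂ | 0 < z.im} \ Metric.closedBall (x : ℂ) ε) ∧
    gMap x ε '' ({z : ℂ | 0 < z.im} \ Metric.closedBall (x : ℂ) ε) = {z : ℂ | 0 < z.im} := by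
  have habs : ∀ z : ℂ, z ∈ {z : ℂ | 0 < z.im} \ Metric.closedBall (x : ℂ) ε →
      ε < ‖z - x‖ ∧ 0 < z.im := by
    intro z hz
    obtain ⟨h1, h2⟩ := hz
    rw [Metric.mem_closedBall, not_le, Complex.dist_eq] at h2
    exact ⟨h2, h1⟩
  have hne : ∀ z : ℂ, ε < ‖z - x‖ → z - (x:ℂ) ≠ 0 := by
    intro z h hz
    rw [hz] at h; simp at h; linarith
  refine ⟨?_, ?_, ?_⟩
  · intro z hz
    obtain ⟨h1, h2⟩ := habs z hz
    exact differentiableAt_id.add ((differentiableAt_const _).div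
      (differentiableAt_id.sub (differentiableAt_const _)) (hne z h1))
  · intro z1 hz1 z2 hz2 h
    obtain ⟨ha1, hb1⟩ := habs z1 hz1
    obtain ⟨ha2, hb2⟩ := habs z2 hz2
    have hn1 := hne z1 ha1
    have hn2 := hne z2 ha2
    unfold gMap at h
    have key : (z1 - z2) * ((z1 - x) * (z2 - x) - (ε:ℂ)^2) = 0 := by
      field_simp at h
      linear_combination h
    have hprod : (z1 - x) * (z2 - x) - (ε:ℂ)^2 ≠ 0 := by
      intro h0
      have : ‖(z1 - x) * (z2 - x)‖ = ε^2 := by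
        rw [sub_eq_zero] at h0
        rw [h0, norm_pow, Complex.norm_real, Real.norm_eq_abs, abs_of_pos hε]
      rw [norm_mul] at this
      nlinarith [norm_nonneg (z1 - x), norm_nonneg (z2 - x)]
    have := mul_eq_zero.mp key
    rcases this with h0 | h0
    · exact sub_eq_zero.mp h0
    · exact absurd h0 hprod
  · ext ζ
    simp only [Set.mem_image, Set.mem_setOf_eq]
    constructor
    · rintro ⟨z, hz, rfl⟩
      obtain ⟨ha, hb⟩ := habs z hz
      have hn := hne z ha
      have hns : ε^2 < Complex.normSq (z - x) := by
        have := Complex.sq_norm (z - x)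
        nlinarith
      have hnpos : 0 < Complex.normSq (z - x) := Complex.normSq_pos.mpr hn
      have him : (gMap x ε z).im = z.im * (Complex.normSq (z - x) - ε^2) / Complex.normSq (z - x) := by
        unfold gMap
        rw [Complex.add_im, Complex.div_im, ← Complex.ofReal_pow]
        simp only [Complex.ofReal_im, Complex.ofReal_re, Complex.sub_im, sub_zero]
        field_simp
        ring
      rw [him]
      exact div_pos (mul_pos hb (by linarith)) hnpos
    · intro hζ
      -- solve the quadratic w^2 - u w + ε^2 = 0 with u = ζ - x
      set u : ℂ := ζ - x with hu
      have hui : 0 < u.im := by simp [hu]; exact hζ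
      obtain ⟨s, hs⟩ : ∃ s : ℂ, s^2 = u^2 - 4*ε^2 :=
        IsAlgClosed.exists_pow_nat_eq (u^2 - 4*(ε:ℂ)^2) zero_lt_two
      set w1 : ℂ := (u + s)/2 with hw1
      set w2 : ℂ := (u - s)/2 with hw2
      have hsum : w1 + w2 = u := by rw [hw1, hw2]; ring
      have hprod : w1 * w2 = (ε:ℂ)^2 := by
        rw [hw1, hw2]
        field_simp
        linear_combination -hs
      have hε2 : ‖(ε:ℂ)^2‖ = ε^2 := by
        rw [norm_pow, Complex.norm_real, Real.norm_eq_abs, abs_of_pos hε]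
      -- one of w1, w2 has modulus > ε
      have hcase : ε < ‖w1‖ ∨ ε < ‖w2‖ := by
        by_contra hc
        push_neg at hc
        obtain ⟨hc1, hc2⟩ := hc
        have habsprod : ‖w1‖ * ‖w2‖ = ε^2 := by
          rw [← norm_mul, hprod, hε2]
        have he1 : ‖w1‖ = ε := by
          nlinarith [norm_nonneg w1, norm_nonneg w2]
        have hw1ne : w1 ≠ 0 := by
          intro h0; rw [h0] at habsprod; simp at habsprod; nlinarith
        -- w2 = conj w1
        have hconj : w2 = starRingEnd ℂ w1 := by
          have hn1 : w1 * starRingEnd ℂ w1 = (ε:ℂ)^2 := by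
            rw [Complex.mul_conj]
            norm_cast
            rw [← Complex.sq_norm, he1]
          have := hprod.trans hn1.symm
          exact mul_left_cancel₀ hw1ne this
        have : u.im = 0 := by
          rw [← hsum, Complex.add_im, hconj, Complex.conj_im]
          ring
        linarith
      -- symmetric argument
      have main : ∀ w w' : ℂ, w + w' = u → w * w' = (ε:ℂ)^2 → ε < ‖w‖ →
          ∃ z, (0 < z.im ∧ z ∉ Metric.closedBall (x:ℂ) ε) ∧ gMap x ε z = ζ := by
        intro w w' hsw hpw haw
        have hwne : w ≠ 0 := by
          intro h0; rw [h0] at haw; simp at haw; linarith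
        have hns : ε^2 < Complex.normSq w := by
          have := Complex.sq_norm w
          nlinarith
        have hnpos : 0 < Complex.normSq w := Complex.normSq_pos.mpr hwne
        have hw' : w' = (ε:ℂ)^2 / w := by
          rw [eq_div_iff hwne]
          linear_combination hpw
        have hw'im : w'.im = -(ε^2 * w.im) / Complex.normSq w := by
          rw [hw', Complex.div_im, ← Complex.ofReal_pow]
          simp only [Complex.ofReal_im, Complex.ofReal_re]
          field_simp
          ring
        have huim : u.im = w.im * (Complex.normSq w - ε^2) / Complex.normSq w := by
          rw [← hsw, Complex.add_im, hw'im]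
          field_simp
          ring
        have hwim : 0 < w.im := by
          by_contra hcon
          push_neg at hcon
          rw [huim] at hui
          have h2 : 0 < w.im * (Complex.normSq w - ε^2) := by
            have h3 := mul_pos hui hnpos
            rwa [div_mul_cancel₀ _ (ne_of_gt hnpos)] at h3
          nlinarith
        refine ⟨w + x, ⟨?_, ?_⟩, ?_⟩
        · simpa using hwim
        · rw [Metric.mem_closedBall, not_le, Complex.dist_eq]
          simpa using haw
        · unfold gMap
          have heq : (w + (x:ℂ)) - x = w := by ring
          rw [heq, ← hw']
          rw [hu] at hsw
          linear_combination hsw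
      rcases hcase with h | h
      · obtain ⟨z, ⟨hz1, hz2⟩, hz3⟩ := main w1 w2 hsum hprod h
        exact ⟨z, ⟨hz1, hz2⟩, hz3⟩
      · obtain ⟨z, ⟨hz1, hz2⟩, hz3⟩ := main w2 w1 (by rw [← hsum]; ring) (by rw [← hprod]; ring) h
        exact ⟨z, ⟨hz1, hz2⟩, hz3⟩
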